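/- Consider the approval profile with alternatives A = {a,b,c} and six voters with approval sets A_1 = {a}, A_2 = {a,b}, A_3 = {b}, A_4 = {b,c}, A_5 = {c}, and A_6 = {a,c}. Then (i) every ranking r of A satisfies q_P(r) ≤ 2/3 — indeed, for every ranking r there exists a group N' of three voters with jd(N',2) = 1 and avg(N', r_{≤2}) = 2/3 — and (ii) there exists a ranking r of A with q_P(r) ≥ 2/3. -/

import Mathlib

open Finset

/-- The set of the top `k` alternatives of the ranking `r`
(where `r j` is the alternative at position `j`). -/
def topk {m : ℕ} (r : Fin m ≃ Fin m) (k : ℕ) : Finset (Fin m) :=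
  Finset.univ.filter fun a => (r.symm a : ℕ) < k

/-- Average representation of the group `N'` with respect to the set `S`. -/
def avgRep {n m : ℕ} (App : Fin n → Finset (Fin m)) (N' : Finset (Fin n))
    (S : Finset (Fin m)) : ℚ :=
  (∑ i ∈ N', ((App i ∩ S).card : ℚ)) / (N'.card : ℚ)

/-- Approval score of alternative `a`. -/
def approvalScore {n m : ℕ} (App : Fin n → Finset (Fin m)) (a : Fin m) : ℕ :=
  (Finset.univ.filter fun i => a ∈ App i).card

/-- The justifiable demand of the group `N'` with respect to the top `k` positions:
`min(⌊(|N'|/n)·k⌋, |⋂_{i ∈ N'} A_i|)`. -/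
def jd {n m : ℕ} (App : Fin n → Finset (Fin m)) (N' : Finset (Fin n)) (k : ℕ) : ℕ :=
  min (⌊((N'.card : ℚ) / (n : ℚ)) * (k : ℚ)⌋.toNat) (N'.inf App).card

/-- The profile of Example 2: alternatives `a = 0`, `b = 1`, `c = 2` and six voters
with approval sets `{a}, {a,b}, {b}, {b,c}, {c}, {a,c}`. -/
def exProfile : Fin 6 → Finset (Fin 3) :=
  ![{0}, {0, 1}, {1}, {1, 2}, {2}, {0, 2}]

private lemma floor_calc (c k : ℕ) : (⌊((c:ℚ)/(6:ℕ))*k⌋).toNat = c*k/6 := by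
  rw [div_mul_eq_mul_div, ← Nat.cast_mul, Int.floor_toNat, Nat.floor_div_natCast, Nat.floor_natCast]

private lemma jd_eq (N' : Finset (Fin 6)) (k : ℕ) :
    jd exProfile N' k = min (N'.card * k / 6) (N'.inf exProfile).card := by
  unfold jd
  rw [show ((6:ℕ):ℚ) = ((6:ℕ):ℚ) from rfl, floor_calc]

private lemma avg_cast (N' : Finset (Fin 6)) (S : Finset (Fin 3)) :
    avgRep exProfile N' S
      = ((∑ i ∈ N', (exProfile i ∩ S).card : ℕ) : ℚ) / (N'.card : ℚ) := by
  simp [avgRep]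

private lemma avg_ge (s c : ℕ) (hc : 0 < c) (h : 2*c ≤ 3*s) : (2:ℚ)/3 ≤ (s:ℚ)/(c:ℚ) := by
  rw [div_le_div_iff₀ (by norm_num) (by positivity)]
  calc (2:ℚ)*c = ((2*c:ℕ):ℚ) := by push_cast; ring
    _ ≤ ((3*s:ℕ):ℚ) := by exact_mod_cast h
    _ = s*3 := by push_cast; ring

private lemma topk2 (r : Fin 3 ≃ Fin 3) : topk r 2 = ({0,1,2} : Finset (Fin 3)) \ {r 2} := by
  ext a
  simp only [topk, Finset.mem_filter, Finset.mem_univ, true_and, Finset.mem_sdiff,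
    Finset.mem_insert, Finset.mem_singleton]
  have h1 : ∀ x : Fin 3, ((x:ℕ) < 2 ↔ x ≠ 2) := by decide
  have h2 : ∀ x : Fin 3, (x = 0 ∨ x = 1 ∨ x = 2) := by decide
  rw [h1, ne_eq, Equiv.symm_apply_eq]
  simp [h2 a]

/-- Part (i) as a standalone lemma. -/
private lemma part1 (r : Fin 3 ≃ Fin 3) : ∃ N' : Finset (Fin 6), N'.card = 3 ∧
    jd exProfile N' 2 = 1 ∧ avgRep exProfile N' (topk r 2) = 2 / 3 := by
  have h2 : ∀ x : Fin 3, (x = 0 ∨ x = 1 ∨ x = 2) := by decide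
  have key : ∀ N' : Finset (Fin 6), ∀ S : Finset (Fin 3), N'.card = 3 →
      (N'.inf exProfile).card = 1 → (∑ i ∈ N', (exProfile i ∩ S).card) = 2 →
      N'.card = 3 ∧ jd exProfile N' 2 = 1 ∧ avgRep exProfile N' S = 2 / 3 := by
    intro N' S hc hi hs
    refine ⟨hc, ?_, ?_⟩
    · rw [jd_eq, hc, hi]; rfl
    · rw [avg_cast, hs, hc]; norm_num
  rcases h2 (r 2) with h | h | h <;> rw [topk2, h]
  · exact ⟨{0,1,5}, by
      rw [show ({0,1,2} : Finset (Fin 3)) \ {0} = {1,2} from by decide]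
      exact key _ _ (by decide) (by decide) (by decide)⟩
  · exact ⟨{1,2,3}, by
      rw [show ({0,1,2} : Finset (Fin 3)) \ {1} = {0,2} from by decide]
      exact key _ _ (by decide) (by decide) (by decide)⟩
  · exact ⟨{3,4,5}, by
      rw [show ({0,1,2} : Finset (Fin 3)) \ {2} = {0,1} from by decide]
      exact key _ _ (by decide) (by decide) (by decide)⟩

theorem example_profile_quality :
    -- (i) for every ranking there is a three-voter group with `jd(N', 2) = 1` but
    -- average representation `2/3` in the top two positions ...
    (∀ r : Fin 3 ≃ Fin 3, ∃ N' : Finset (Fin 6), N'.card = 3 ∧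
      jd exProfile N' 2 = 1 ∧ avgRep exProfile N' (topk r 2) = 2 / 3) ∧
    -- ... hence every ranking has quality at most `2/3` ...
    (∀ r : Fin 3 ≃ Fin 3, ∃ (N' : Finset (Fin 6)) (k : ℕ), 1 ≤ k ∧ k ≤ 3 ∧
      0 < jd exProfile N' k ∧
      avgRep exProfile N' (topk r k) / (jd exProfile N' k : ℚ) ≤ 2 / 3) ∧
    -- (ii) and some ranking has quality at least `2/3`.
    (∃ r : Fin 3 ≃ Fin 3, ∀ (N' : Finset (Fin 6)) (k : ℕ), 1 ≤ k → k ≤ 3 →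
      0 < jd exProfile N' k →
      (2 : ℚ) / 3 ≤ avgRep exProfile N' (topk r k) / (jd exProfile N' k : ℚ)) := by
  refine ⟨part1, ?_, ?_⟩
  · intro r
    obtain ⟨N', hc, hjd, havg⟩ := part1 r
    exact ⟨N', 2, by norm_num, by norm_num, by rw [hjd]; norm_num,
      by rw [hjd, havg]; norm_num⟩
  · refine ⟨Equiv.refl _, ?_⟩
    intro N' k hk1 hk3 hpos
    rw [jd_eq] at hpos ⊢
    have hcard6 : N'.card ≤ 6 := by
      have := Finset.card_le_card (Finset.subset_univ N')
      simpa using this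
    have hnotuniv : N'.card = 6 → False := by
      intro h6
      have : N' = Finset.univ := Finset.eq_univ_of_card _ (by simp [h6])
      rw [this, show (Finset.univ.inf exProfile).card = 0 from by decide] at hpos
      omega
    have hinf1 : 2 ≤ N'.card → (N'.inf exProfile).card ≤ 1 :=
      fun h => (by decide : ∀ M : Finset (Fin 6), 2 ≤ M.card →
        (M.inf exProfile).card ≤ 1) N' h
    interval_cases k
    · -- k = 1
      exfalso
      have h1 : 0 < N'.card * 1 / 6 := lt_of_lt_of_le hpos (min_le_left _ _)
      exact hnotuniv (by omega)
    · -- k = 2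
      have h1 : 0 < N'.card * 2 / 6 := lt_of_lt_of_le hpos (min_le_left _ _)
      have h2 : 0 < (N'.inf exProfile).card := lt_of_lt_of_le hpos (min_le_right _ _)
      have hc3 : 3 ≤ N'.card := by omega
      have hc5 : N'.card ≤ 5 := by
        rcases Nat.lt_or_ge N'.card 6 with h | h
        · omega
        · exact absurd (by omega) (fun x => hnotuniv x)
      have hji : (N'.inf exProfile).card = 1 := by have := hinf1 (by omega); omega
      rw [show min (N'.card * 2 / 6) (N'.inf exProfile).card = 1 from by rw [hji]; omega]
      rw [Nat.cast_one, div_one, show topk (Equiv.refl (Fin 3)) 2 = {0,1} from by decide,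
        avg_cast]
      exact avg_ge _ _ (by omega)
        ((by decide : ∀ M : Finset (Fin 6), 3 ≤ M.card → 0 < (M.inf exProfile).card →
          2 * M.card ≤ 3 * ∑ i ∈ M, (exProfile i ∩ {0,1}).card) N' hc3 h2)
    · -- k = 3
      have h1 : 0 < N'.card * 3 / 6 := lt_of_lt_of_le hpos (min_le_left _ _)
      have h2 : 0 < (N'.inf exProfile).card := lt_of_lt_of_le hpos (min_le_right _ _)
      have hc2 : 2 ≤ N'.card := by omega
      have hji : (N'.inf exProfile).card = 1 := by have := hinf1 hc2; omega
      rw [show min (N'.card * 3 / 6) (N'.inf exProfile).card = 1 from by rw [hji]; omega]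
      rw [Nat.cast_one, div_one, show topk (Equiv.refl (Fin 3)) 3 = {0,1,2} from by decide,
        avg_cast]
      exact avg_ge _ _ (by omega)
        ((by decide : ∀ M : Finset (Fin 6),
          2 * M.card ≤ 3 * ∑ i ∈ M, (exProfile i ∩ {0,1,2}).card) N')
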